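/- Let G be a countable group and H a group such that every isomorphism between two finitely generated subgroups of H extends to an automorphism of H. If every finitely generated subgroup of G embeds into H, then G embeds into H. -/

import Mathlib

/-- If `G` is a countable group and `H` is a homogeneous group (every isomorphism between two
finitely generated subgroups of `H` extends to an automorphism of `H`), and every finitely
generated subgroup of `G` embeds into `H`, then `G` embeds into `H`. -/
theorem embeds_of_fg_embeds {G H : Type*} [Group G] [Countable G] [Group H]
    (hhom : ∀ (A B : Subgroup H), A.FG → B.FG → ∀ e : A ≃* B,
      ∃ φ : H ≃* H, ∀ a : A, φ (a : H) = ((e a : B) : H))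
    (hemb : ∀ K : Subgroup G, K.FG → ∃ f : K →* H, Function.Injective f) :
    ∃ f : G →* H, Function.Injective f := by
  classical
  obtain ⟨en, hen⟩ := exists_surjective_nat G
  -- increasing chain of f.g. subgroups
  set K : ℕ → Subgroup G := fun n => Subgroup.closure (en '' Set.Iic n) with hK
  have hKfg : ∀ n, (K n).FG := fun n =>
    (Subgroup.fg_iff _).2 ⟨en '' Set.Iic n, rfl, (Set.finite_Iic n).image _⟩
  have hmono : ∀ n, K n ≤ K (n + 1) := fun n =>
    Subgroup.closure_mono (Set.image_mono (Set.Iic_subset_Iic.2 n.le_succ))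
  have hmono' : ∀ {m n}, m ≤ n → K m ≤ K n := fun {m n} h =>
    Subgroup.closure_mono (Set.image_mono (Set.Iic_subset_Iic.2 h))
  have hmem : ∀ g : G, ∃ n, g ∈ K n := by
    intro g
    obtain ⟨n, rfl⟩ := hen g
    exact ⟨n, Subgroup.subset_closure ⟨n, Set.mem_Iic.2 le_rfl, rfl⟩⟩
  -- extension step
  have step : ∀ n (f : ↥(K n) →* H), Function.Injective f →
      ∃ f' : ↥(K (n + 1)) →* H, Function.Injective f' ∧
        ∀ x : ↥(K n), f' (Subgroup.inclusion (hmono n) x) = f x := by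
    intro n f hf
    obtain ⟨g, hg⟩ := hemb (K (n + 1)) (hKfg (n + 1))
    set gi : ↥(K n) →* H := g.comp (Subgroup.inclusion (hmono n)) with hgi
    have hgiinj : Function.Injective gi := hg.comp (Subgroup.inclusion_injective _)
    have hAfg : gi.range.FG := by
      have : Group.FG ↥(K n) := (Group.fg_iff_subgroup_fg _).2 (hKfg n)
      exact (Group.fg_iff_subgroup_fg _).1 (Group.fg_range gi)
    have hBfg : f.range.FG := by
      have : Group.FG ↥(K n) := (Group.fg_iff_subgroup_fg _).2 (hKfg n)
      exact (Group.fg_iff_subgroup_fg _).1 (Group.fg_range f)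
    set e : gi.range ≃* f.range :=
      (MonoidHom.ofInjective hgiinj).symm.trans (MonoidHom.ofInjective hf) with he
    obtain ⟨φ, hφ⟩ := hhom gi.range f.range hAfg hBfg e
    refine ⟨φ.toMonoidHom.comp g, φ.injective.comp hg, ?_⟩
    intro x
    have h1 : φ (gi x) = ((e (MonoidHom.ofInjective hgiinj x) : f.range) : H) := by
      have := hφ (MonoidHom.ofInjective hgiinj x)
      rwa [MonoidHom.ofInjective_apply] at this
    have h2 : e (MonoidHom.ofInjective hgiinj x) = MonoidHom.ofInjective hf x := by
      simp [he]
    simp only [MulEquiv.coe_toMonoidHom, MonoidHom.coe_comp, Function.comp_apply]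
    rw [show g (Subgroup.inclusion (hmono n) x) = gi x from rfl, h1, h2,
      MonoidHom.ofInjective_apply]
  choose step' hstep1 hstep2 using step
  -- recursive sequence of compatible embeddings
  obtain ⟨f0, hf0⟩ := hemb (K 0) (hKfg 0)
  let Φ : ∀ n, {f : ↥(K n) →* H // Function.Injective f} := fun n =>
    Nat.rec ⟨f0, hf0⟩ (fun n p => ⟨step' n p.1 p.2, hstep1 n p.1 p.2⟩) n
  have hΦsucc : ∀ n (x : ↥(K n)),
      (Φ (n + 1)).1 (Subgroup.inclusion (hmono n) x) = (Φ n).1 x := fun n x =>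
    hstep2 n (Φ n).1 (Φ n).2 x
  have hΦ : ∀ {m n} (h : m ≤ n) (x : ↥(K m)),
      (Φ n).1 (Subgroup.inclusion (hmono' h) x) = (Φ m).1 x := by
    intro m n h
    induction n with
    | zero =>
      intro x
      obtain rfl : m = 0 := Nat.le_zero.mp h
      rw [show Subgroup.inclusion (hmono' h) x = x from Subtype.ext (Subgroup.coe_inclusion _ x)]
    | succ n ih =>
      intro x
      rcases Nat.lt_or_ge m (n + 1) with h' | h'
      · have hmn : m ≤ n := Nat.lt_succ_iff.mp h'
        have : Subgroup.inclusion (hmono' h) x =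
            Subgroup.inclusion (hmono n) (Subgroup.inclusion (hmono' hmn) x) :=
          Subtype.ext (by simp [Subgroup.coe_inclusion])
        rw [this, hΦsucc, ih hmn]
      · obtain rfl : m = n + 1 := le_antisymm h h'
        rw [show Subgroup.inclusion (hmono' h) x = x from Subtype.ext (Subgroup.coe_inclusion _ x)]
  choose ind hind using hmem
  -- key coherence: value independent of chosen level
  have key : ∀ (g : G) (n : ℕ) (hg : g ∈ K n), (Φ n).1 ⟨g, hg⟩ = (Φ (ind g)).1 ⟨g, hind g⟩ := by
    intro g n hg
    rcases le_total n (ind g) with h | h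
    · have : (⟨g, hind g⟩ : ↥(K (ind g))) = Subgroup.inclusion (hmono' h) ⟨g, hg⟩ :=
        Subtype.ext (by simp [Subgroup.coe_inclusion])
      rw [this, hΦ h]
    · have : (⟨g, hg⟩ : ↥(K n)) = Subgroup.inclusion (hmono' h) ⟨g, hind g⟩ :=
        Subtype.ext (by simp [Subgroup.coe_inclusion])
      rw [this, hΦ h]
  let F : G → H := fun g => (Φ (ind g)).1 ⟨g, hind g⟩
  have Fval : ∀ (g : G) (n : ℕ) (hg : g ∈ K n), F g = (Φ n).1 ⟨g, hg⟩ := fun g n hg =>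
    (key g n hg).symm
  have Fmul : ∀ a b : G, F (a * b) = F a * F b := by
    intro a b
    set n := max (ind a) (max (ind b) (ind (a * b))) with hn
    have ha : a ∈ K n := hmono' (le_max_left _ _) (hind a)
    have hb : b ∈ K n := hmono' (le_max_of_le_right (le_max_left _ _)) (hind b)
    have hab : a * b ∈ K n := hmono' (le_max_of_le_right (le_max_right _ _)) (hind (a * b))
    rw [Fval a n ha, Fval b n hb, Fval (a * b) n hab]
    have : (⟨a * b, hab⟩ : ↥(K n)) = ⟨a, ha⟩ * ⟨b, hb⟩ := rfl
    rw [this, map_mul]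
  refine ⟨MonoidHom.mk' F Fmul, ?_⟩
  intro a b hab
  set n := max (ind a) (ind b) with hn
  have ha : a ∈ K n := hmono' (le_max_left _ _) (hind a)
  have hb : b ∈ K n := hmono' (le_max_right _ _) (hind b)
  have : (Φ n).1 ⟨a, ha⟩ = (Φ n).1 ⟨b, hb⟩ := by
    rw [← Fval a n ha, ← Fval b n hb]; exact hab
  simpa using congrArg Subtype.val ((Φ n).2 this)
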